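/- Every 2-local automorphism Θ of B(H) is multiplicative on pairs in the sense that tr(Θ(x)y) = tr(xy) whenever y is finite-rank and Θ fixes all finite-rank operators; consequently tr((Θ(x) − x) y) = 0 for all finite-rank y. -/

import Mathlib

noncomputable section

variable {H : Type*} [NormedAddCommGroup H] [InnerProductSpace ℂ H] [CompleteSpace H]

/-- A bounded operator has finite rank if its range is finite-dimensional. -/
def FiniteRank (x : H →L[ℂ] H) : Prop :=
  FiniteDimensional ℂ (LinearMap.range (x : H →ₗ[ℂ] H))

/-- A 2-local automorphism: at every pair of points it agrees with some
algebra automorphism of `B(H)`. -/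
def Is2LocalAutomorphism (Θ : (H →L[ℂ] H) → (H →L[ℂ] H)) : Prop :=
  ∀ x y : H →L[ℂ] H, ∃ Ψ : (H →L[ℂ] H) ≃ₐ[ℂ] (H →L[ℂ] H), Θ x = Ψ x ∧ Θ y = Ψ y

/-- The canonical trace, computed along a Hilbert basis. -/
def traceAlong {ι : Type*} (β : HilbertBasis ι ℂ H) (x : H →L[ℂ] H) : ℂ :=
  ∑' i, (inner ℂ (β i) (x (β i)) : ℂ)

/-- The rank-one operator `h ↦ ⟨v, h⟩ • u`. -/
def rkOne (u v : H) : H →L[ℂ] H := (innerSL ℂ v).smulRight u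

lemma rkOne_apply (u v h : H) : rkOne u v h = (inner ℂ v h : ℂ) • u := rfl

lemma rkOne_finiteRank (u v : H) : FiniteRank (rkOne u v) := by
  unfold FiniteRank
  have hle : LinearMap.range ((rkOne u v : H →L[ℂ] H) : H →ₗ[ℂ] H) ≤ ℂ ∙ u := by
    rintro w ⟨h, rfl⟩
    exact Submodule.smul_mem _ _ (Submodule.mem_span_singleton_self u)
  exact Submodule.finiteDimensional_of_le hle

lemma conj_rkOne (x : H →L[ℂ] H) (u v : H) :
    rkOne u v * x * rkOne u v = (inner ℂ v (x u) : ℂ) • rkOne u v := by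
  ext h
  simp only [ContinuousLinearMap.mul_apply, ContinuousLinearMap.smul_apply, rkOne_apply,
    map_smul, inner_smul_right, smul_smul]
  ring_nf

/-- A 2-local automorphism fixing all finite-rank operators is the identity. -/
lemma theta_eq (Θ : (H →L[ℂ] H) → (H →L[ℂ] H)) (hΘ : Is2LocalAutomorphism Θ)
    (hfix : ∀ z : H →L[ℂ] H, FiniteRank z → Θ z = z) (x : H →L[ℂ] H) : Θ x = x := by
  have key : ∀ u v : H, (inner ℂ v (Θ x u) : ℂ) = inner ℂ v (x u) := by
    intro u v
    rcases eq_or_ne u 0 with rfl | hu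
    · simp
    rcases eq_or_ne v 0 with rfl | hv
    · simp
    obtain ⟨Ψ, hx, hp⟩ := hΘ x (rkOne u v)
    have hfp : Ψ (rkOne u v) = rkOne u v := by
      rw [← hp]; exact hfix _ (rkOne_finiteRank u v)
    have h1 : rkOne u v * Ψ x * rkOne u v = (inner ℂ v (x u) : ℂ) • rkOne u v := by
      calc rkOne u v * Ψ x * rkOne u v = Ψ (rkOne u v * x * rkOne u v) := by
              simp [map_mul, hfp]
        _ = (inner ℂ v (x u) : ℂ) • rkOne u v := by
              rw [conj_rkOne, map_smul, hfp]
    rw [conj_rkOne] at h1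
    have h2 := congrArg (fun z : H →L[ℂ] H => z v) h1
    simp only [ContinuousLinearMap.smul_apply, rkOne_apply] at h2
    have hvv : (inner ℂ v v : ℂ) ≠ 0 := by
      exact inner_self_ne_zero.mpr hv
    have h3 : ((inner ℂ v (Ψ x u) : ℂ) * inner ℂ v v - (inner ℂ v (x u) : ℂ) * inner ℂ v v) • u = 0 := by
      rw [sub_smul]
      simp only [smul_smul] at h2
      rw [h2, sub_self]
    rcases smul_eq_zero.mp h3 with hc | hc
    · rw [hx]
      exact mul_right_cancel₀ hvv (by linear_combination hc)
    · exact absurd hc hu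
  ext u
  exact ext_inner_left ℂ (fun v => key u v)

theorem twoLocalAutomorphism_trace_eq {ι : Type*} (β : HilbertBasis ι ℂ H)
    (Θ : (H →L[ℂ] H) → (H →L[ℂ] H)) (hΘ : Is2LocalAutomorphism Θ)
    (hfix : ∀ z : H →L[ℂ] H, FiniteRank z → Θ z = z)
    (x y : H →L[ℂ] H) (hy : FiniteRank y) :
    traceAlong β (Θ x * y) = traceAlong β (x * y) ∧
    traceAlong β ((Θ x - x) * y) = 0 := by
  rw [theta_eq Θ hΘ hfix x]
  refine ⟨rfl, ?_⟩
  simp [traceAlong]
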